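/- Let X be a nodal curve and q a polarization on X. A polarization q on X is non-degenerate if and only if for some (equivalently, every) smoothing X² of X at its separating nodes, the induced polarization q² on X² is general, where q²_Z := q_{Z̄} for a subcurve Z of X² specializing to the subcurve Z̄ of X. -/

import Mathlib

open Finset

variable {V E : Type}

/-- Number of edges in `F` joining a vertex of `A` with a vertex of `B`. -/
def valS [DecidableEq V] [DecidableEq E] (ends : E → V × V) (F : Finset E)
    (A B : Finset V) : ℕ :=
  (F.filter (fun e => ((ends e).1 ∈ A ∧ (ends e).2 ∈ B) ∨
    ((ends e).1 ∈ B ∧ (ends e).2 ∈ A))).card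

/-- Number of edges of the graph joining `A` and `B`. -/
def valAB [Fintype E] [DecidableEq V] [DecidableEq E] (ends : E → V × V)
    (A B : Finset V) : ℕ :=
  valS ends Finset.univ A B

/-- Number of edges of `F` with both endpoints in `W` (loops included). -/
def insideE [DecidableEq V] [DecidableEq E] (ends : E → V × V) (W : Finset V)
    (F : Finset E) : ℕ :=
  (F.filter (fun e => (ends e).1 ∈ W ∧ (ends e).2 ∈ W)).card

/-- The Laplacian of the graph with vertex set `V` and edge set `F`. -/
def lapF [Fintype V] [Fintype E] [DecidableEq V] [DecidableEq E] (ends : E → V × V)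
    (F : Finset E) (d : V → ℤ) (v : V) : ℤ :=
  -d v * (valS ends F {v} {v}ᶜ : ℤ) +
    ∑ w ∈ Finset.univ.erase v, d w * (valS ends F {v} {w} : ℤ)

/-- Characteristic 0-cochain of a set of vertices. -/
def chi [DecidableEq V] (A : Finset V) (v : V) : ℤ := if v ∈ A then 1 else 0

/-- Reachability using edges belonging to `F`. -/
def Reaches (ends : E → V × V) (F : Finset E) (u v : V) : Prop :=
  Relation.ReflTransGen (fun a b => ∃ e ∈ F, ends e = (a, b) ∨ ends e = (b, a)) u v

/-- Connectedness of the graph with vertex set `V` and edge set `F`. -/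
def ConnF (ends : E → V × V) (F : Finset E) : Prop :=
  ∀ u v : V, Reaches ends F u v

/-- Complexity: the number of spanning trees using edges from `F`
(a spanning tree is a connected spanning subgraph with `|V| - 1` edges). -/
noncomputable def complexity [Fintype V] (ends : E → V × V) (F : Finset E) : ℕ :=
  {T : Finset E | T ⊆ F ∧ ConnF ends T ∧ T.card = Fintype.card V - 1}.ncard

/-- The quantity η(d, W) = -d_W - |S ∩ E(Γ[W])| + q_W - val(W)/2. -/
def eta [Fintype V] [Fintype E] [DecidableEq V] [DecidableEq E]
    (ends : E → V × V) (S : Finset E) (q : V → ℚ) (d : V → ℤ) (W : Finset V) : ℚ :=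
  -(∑ w ∈ W, (d w : ℚ)) - (insideE ends W S : ℚ) + (∑ w ∈ W, q w)
    - (valAB ends W Wᶜ : ℚ) / 2

/-- The quantity ε(d, W) = d_W + |S ∩ E(Γ[W])| - q_W - val(W)/2 + val_S(W). -/
def eps [Fintype V] [Fintype E] [DecidableEq V] [DecidableEq E]
    (ends : E → V × V) (S : Finset E) (q : V → ℚ) (d : V → ℤ) (W : Finset V) : ℚ :=
  (∑ w ∈ W, (d w : ℚ)) + (insideE ends W S : ℚ) - (∑ w ∈ W, q w)
    - (valAB ends W Wᶜ : ℚ) / 2 + (valS ends S W Wᶜ : ℚ)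

/-- A 0-cochain `d` is semistable on Γ∖S with respect to `q`. -/
def Semistable [Fintype V] [Fintype E] [DecidableEq V] [DecidableEq E]
    (ends : E → V × V) (S : Finset E) (q : V → ℚ) (d : V → ℤ) : Prop :=
  ((∑ v, d v : ℤ) : ℚ) = (∑ v, q v) - S.card ∧
  ∀ W : Finset V, W ≠ Finset.univ →
    (∑ w ∈ W, (d w : ℚ)) + (insideE ends W S : ℚ) ≥
      (∑ w ∈ W, q w) - (valAB ends W Wᶜ : ℚ) / 2

/-- A 0-cochain `d` is `v₀`-quasistable on Γ∖S with respect to `q`. -/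
def Quasistable [Fintype V] [Fintype E] [DecidableEq V] [DecidableEq E]
    (ends : E → V × V) (S : Finset E) (q : V → ℚ) (v₀ : V) (d : V → ℤ) : Prop :=
  Semistable ends S q d ∧
  ∀ W : Finset V, W ≠ Finset.univ → v₀ ∈ W →
    (∑ w ∈ W, (d w : ℚ)) + (insideE ends W S : ℚ) >
      (∑ w ∈ W, q w) - (valAB ends W Wᶜ : ℚ) / 2

/-- Connectedness of the subgraph induced on `A`. -/
def ConnOn (ends : E → V × V) (A : Finset V) : Prop :=
  ∀ u ∈ A, ∀ v ∈ A,
    Relation.ReflTransGen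
      (fun a b => a ∈ A ∧ b ∈ A ∧ ∃ e : E, ends e = (a, b) ∨ ends e = (b, a)) u v

/-- `C` is a connected component of the subgraph induced on `A`. -/
def IsCompOf [DecidableEq V] (ends : E → V × V) (C A : Finset V) : Prop :=
  C.Nonempty ∧ C ⊆ A ∧ ConnOn ends C ∧
  ∀ e : E, ¬ (((ends e).1 ∈ C ∧ (ends e).2 ∈ A \ C) ∨
    ((ends e).1 ∈ A \ C ∧ (ends e).2 ∈ C))

/-- An edge is a bridge (separating node) if removing it disconnects the graph. -/
def Bridge [Fintype E] [DecidableEq E] (ends : E → V × V) (e : E) : Prop :=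
  ¬ ConnF ends (Finset.univ.erase e)

/-- `e` is a boundary edge of `W`: it joins `W` with its complement. -/
def Boundary (ends : E → V × V) (W : Finset V) (e : E) : Prop :=
  ((ends e).1 ∈ W ∧ (ends e).2 ∉ W) ∨ ((ends e).1 ∉ W ∧ (ends e).2 ∈ W)

/-- `W` is a spine: all of its boundary edges are bridges (separating nodes). -/
def Spine [Fintype E] [DecidableEq E] (ends : E → V × V) (W : Finset V) : Prop :=
  ∀ e : E, Boundary ends W e → Bridge ends e

/-- The polarization `q` is integral at the subcurve `W`: for every connected
component `C` of `W` and of `Wᶜ`, the number q_C - δ_C/2 is an integer. -/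
def IntegralAt [Fintype V] [Fintype E] [DecidableEq V] [DecidableEq E]
    (ends : E → V × V) (q : V → ℚ) (W : Finset V) : Prop :=
  ∀ C : Finset V, (IsCompOf ends C W ∨ IsCompOf ends C Wᶜ) →
    ∃ n : ℤ, (∑ w ∈ C, q w) - (valAB ends C Cᶜ : ℚ) / 2 = (n : ℚ)

/-- The polarization `q` is general: not integral at any proper subcurve. -/
def GeneralPol [Fintype V] [Fintype E] [DecidableEq V] [DecidableEq E]
    (ends : E → V × V) (q : V → ℚ) : Prop :=
  ∀ W : Finset V, W.Nonempty → W ≠ Finset.univ → ¬ IntegralAt ends q W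

/-- The polarization `q` is non-degenerate: not integral at any proper subcurve
which is not a spine. -/
def NonDegPol [Fintype V] [Fintype E] [DecidableEq V] [DecidableEq E]
    (ends : E → V × V) (q : V → ℚ) : Prop :=
  ∀ W : Finset V, W.Nonempty → W ≠ Finset.univ → ¬ Spine ends W →
    ¬ IntegralAt ends q W

/-- A line bundle of multidegree `d` is `q`-semistable. -/
def SemistableLB [Fintype V] [Fintype E] [DecidableEq V] [DecidableEq E]
    (ends : E → V × V) (q : V → ℚ) (d : V → ℤ) : Prop :=
  ((∑ v, d v : ℤ) : ℚ) = (∑ v, q v) ∧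
  ∀ W : Finset V, W ≠ Finset.univ →
    ((∑ w ∈ W, d w : ℤ) : ℚ) ≥ (∑ w ∈ W, q w) - (valAB ends W Wᶜ : ℚ) / 2


section Aux
variable (ends : E → V × V)

lemma reaches_symm {F : Finset E} {u v : V} (h : Reaches ends F u v) :
    Reaches ends F v u := by
  refine (@Relation.ReflTransGen.stdSymm _ (fun a b => ∃ e ∈ F, ends e = (a, b) ∨ ends e = (b, a)) ⟨?_⟩).symm _ _ h
  rintro a b ⟨e, he, h | h⟩
  · exact ⟨e, he, Or.inr h⟩
  · exact ⟨e, he, Or.inl h⟩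

lemma bridge_not_reach [Fintype E] [DecidableEq E]
    (hconn : ConnF ends (Finset.univ : Finset E)) {b : E} (hb : Bridge ends b) :
    ¬ Reaches ends (Finset.univ.erase b) (ends b).1 (ends b).2 := by
  intro hxy
  apply hb
  intro u v
  have h := hconn u v
  induction h with
  | refl => exact Relation.ReflTransGen.refl
  | tail h1 h2 ih =>
    obtain ⟨e, _, hcase⟩ := h2
    by_cases heb : e = b
    · subst heb
      rcases hcase with h | h
      · have h1' : _ = _ := congrArg Prod.fst h
        have h2' : _ = _ := congrArg Prod.snd h
        simp at h1' h2'
        rw [h1', h2'] at hxy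
        exact ih.trans hxy
      · have h1' : _ = _ := congrArg Prod.fst h
        have h2' : _ = _ := congrArg Prod.snd h
        simp at h1' h2'
        rw [h1', h2'] at hxy
        exact ih.trans (reaches_symm ends hxy)
    · exact ih.tail ⟨e, Finset.mem_erase.mpr ⟨heb, Finset.mem_univ e⟩, hcase⟩

/-- The side of a bridge containing its first endpoint. -/
noncomputable def sideA [Fintype V] [Fintype E] [DecidableEq E] (b : E) : Finset V :=
  @Finset.filter V (fun v => Reaches ends (Finset.univ.erase b) (ends b).1 v)
    (Classical.decPred _) Finset.univ

lemma mem_sideA [Fintype V] [Fintype E] [DecidableEq E] {b : E} {v : V} :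
    v ∈ sideA ends b ↔ Reaches ends (Finset.univ.erase b) (ends b).1 v := by
  simp [sideA]

lemma sideA_fst [Fintype V] [Fintype E] [DecidableEq E] (b : E) :
    (ends b).1 ∈ sideA ends b :=
  (mem_sideA ends).mpr Relation.ReflTransGen.refl

lemma sideA_snd [Fintype V] [Fintype E] [DecidableEq E]
    (hconn : ConnF ends (Finset.univ : Finset E)) {b : E} (hb : Bridge ends b) :
    (ends b).2 ∉ sideA ends b := by
  intro h
  exact bridge_not_reach ends hconn hb ((mem_sideA ends).mp h)

lemma sideA_edge [Fintype V] [Fintype E] [DecidableEq E] {b f : E} (hfb : f ≠ b)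
    {a c : V} (hf : ends f = (a, c) ∨ ends f = (c, a)) :
    (a ∈ sideA ends b ↔ c ∈ sideA ends b) := by
  have key : ∀ x y : V, ends f = (x, y) ∨ ends f = (y, x) →
      x ∈ sideA ends b → y ∈ sideA ends b := by
    intro x y hxy hx
    rw [mem_sideA] at hx ⊢
    exact hx.tail ⟨f, Finset.mem_erase.mpr ⟨hfb, Finset.mem_univ f⟩, hxy⟩
  constructor
  · exact key a c hf
  · exact key c a (hf.symm)

end Aux
section Aux2
variable (ends : E → V × V)

/-- The relation underlying `ConnOn`. -/
def RelIn (A : Finset V) (a b : V) : Prop :=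
  a ∈ A ∧ b ∈ A ∧ ∃ e : E, ends e = (a, b) ∨ ends e = (b, a)

lemma relIn_symm {A : Finset V} {a b : V} (h : RelIn ends A a b) : RelIn ends A b a :=
  ⟨h.2.1, h.1, by obtain ⟨e, he⟩ := h.2.2; exact ⟨e, he.symm⟩⟩

/-- The connected component of `v` inside `A`. -/
noncomputable def compOf (A : Finset V) (v : V) : Finset V :=
  @Finset.filter V (fun u => Relation.ReflTransGen (RelIn ends A) v u)
    (Classical.decPred _) A

lemma mem_compOf {A : Finset V} {v u : V} :
    u ∈ compOf ends A v ↔ u ∈ A ∧ Relation.ReflTransGen (RelIn ends A) v u := by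
  simp [compOf]

lemma self_mem_compOf {A : Finset V} {v : V} (hv : v ∈ A) : v ∈ compOf ends A v :=
  (mem_compOf ends).mpr ⟨hv, Relation.ReflTransGen.refl⟩

lemma compOf_isCompOf [DecidableEq V] {A : Finset V} {v : V} (hv : v ∈ A) :
    IsCompOf ends (compOf ends A v) A := by
  have hsub : compOf ends A v ⊆ A := fun u hu => ((mem_compOf ends).mp hu).1
  have hclosed : ∀ a b : V, a ∈ compOf ends A v → RelIn ends A a b →
      b ∈ compOf ends A v := by
    intro a b ha hab
    rw [mem_compOf] at ha ⊢
    exact ⟨hab.2.1, ha.2.tail hab⟩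
  refine ⟨⟨v, self_mem_compOf ends hv⟩, hsub, ?_, ?_⟩
  · -- ConnOn
    have key : ∀ u : V, Relation.ReflTransGen (RelIn ends A) v u →
        Relation.ReflTransGen (RelIn ends (compOf ends A v)) v u := by
      intro u h
      induction h with
      | refl => exact Relation.ReflTransGen.refl
      | tail h1 h2 ih =>
        refine ih.tail ?_
        refine ⟨(mem_compOf ends).mpr ⟨h2.1, h1⟩, (mem_compOf ends).mpr ⟨h2.2.1, h1.tail h2⟩, h2.2.2⟩
    intro a ha b hb
    have hva := key a ((mem_compOf ends).mp ha).2
    have hvb := key b ((mem_compOf ends).mp hb).2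
    have hav : Relation.ReflTransGen (RelIn ends (compOf ends A v)) a v :=
      (@Relation.ReflTransGen.stdSymm _ (RelIn ends (compOf ends A v)) ⟨fun _ _ h => relIn_symm ends h⟩).symm _ _ hva
    exact hav.trans hvb
  · -- no crossing edges
    intro e he
    rcases he with ⟨h1, h2⟩ | ⟨h1, h2⟩
    · rcases Finset.mem_sdiff.mp h2 with ⟨h2a, h2c⟩
      exact h2c (hclosed _ _ h1 ⟨hsub h1, h2a, e, Or.inl rfl⟩)
    · rcases Finset.mem_sdiff.mp h1 with ⟨h1a, h1c⟩
      exact h1c (hclosed _ _ h2 ⟨hsub h2, h1a, e, Or.inr rfl⟩)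

/-- A connected subset of `A` meeting a component of `A` is contained in it. -/
lemma subset_comp_of_meet [DecidableEq V] {A C D : Finset V}
    (hC : IsCompOf ends C A) (hD : D ⊆ A) (hconn : ConnOn ends D)
    {x : V} (hxC : x ∈ C) (hxD : x ∈ D) : D ⊆ C := by
  intro d hd
  have hpath := hconn x hxD d hd
  clear hd
  induction hpath with
  | refl => exact hxC
  | @tail m n h1 h2 ih =>
    obtain ⟨ha, hb, e, he⟩ := h2
    by_cases hbC : n ∈ C
    · exact hbC
    · exfalso
      apply hC.2.2.2 e
      have hbAC : n ∈ A \ C := Finset.mem_sdiff.mpr ⟨hD hb, hbC⟩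
      rcases he with he | he
      · exact Or.inl ⟨by rw [he]; exact ih, by rw [he]; exact hbAC⟩
      · exact Or.inr ⟨by rw [he]; exact hbAC, by rw [he]; exact ih⟩

lemma comps_eq_or_disjoint [DecidableEq V] {A C C' : Finset V}
    (hC : IsCompOf ends C A) (hC' : IsCompOf ends C' A) :
    C = C' ∨ Disjoint C C' := by
  by_cases h : Disjoint C C'
  · exact Or.inr h
  · left
    obtain ⟨x, hx, hx'⟩ := Finset.not_disjoint_iff.mp h
    exact le_antisymm (subset_comp_of_meet ends hC' hC.2.1 hC.2.2.1 hx' hx)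
      (subset_comp_of_meet ends hC hC'.2.1 hC'.2.2.1 hx hx')

end Aux2
section Aux3
variable (ends : E → V × V)

/-- Half-integrality predicate. -/
def Pq [Fintype V] [Fintype E] [DecidableEq V] [DecidableEq E] (q : V → ℚ)
    (C : Finset V) : Prop :=
  ∃ n : ℤ, (∑ w ∈ C, q w) - (valAB ends C Cᶜ : ℚ) / 2 = (n : ℚ)

lemma val_union [Fintype V] [Fintype E] [DecidableEq V] [DecidableEq E]
    {A B : Finset V} (hAB : Disjoint A B) :
    valAB ends (A ∪ B) (A ∪ B)ᶜ + 2 * valAB ends A B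
      = valAB ends A Aᶜ + valAB ends B Bᶜ := by
  simp only [valAB, valS, Finset.card_filter]
  rw [Finset.mul_sum, ← Finset.sum_add_distrib, ← Finset.sum_add_distrib]
  refine Finset.sum_congr rfl fun e _ => ?_
  have hd := Finset.disjoint_left.mp hAB
  by_cases hA1 : (ends e).1 ∈ A <;> by_cases hB1 : (ends e).1 ∈ B <;>
    by_cases hA2 : (ends e).2 ∈ A <;> by_cases hB2 : (ends e).2 ∈ B <;>
    first
      | exact (hd hA1 hB1).elim
      | exact (hd hA2 hB2).elim
      | simp [Finset.mem_union, Finset.mem_compl, hA1, hB1, hA2, hB2]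

lemma Pq_empty [Fintype V] [Fintype E] [DecidableEq V] [DecidableEq E] (q : V → ℚ) :
    Pq ends q (∅ : Finset V) := by
  refine ⟨0, ?_⟩
  simp [valAB, valS]

lemma Pq_union [Fintype V] [Fintype E] [DecidableEq V] [DecidableEq E] (q : V → ℚ)
    {A B : Finset V} (hAB : Disjoint A B) (hA : Pq ends q A) (hB : Pq ends q B) :
    Pq ends q (A ∪ B) := by
  obtain ⟨m, hm⟩ := hA
  obtain ⟨n, hn⟩ := hB
  refine ⟨m + n + valAB ends A B, ?_⟩
  have hval := val_union ends hAB
  have hval' : (valAB ends (A ∪ B) (A ∪ B)ᶜ : ℚ)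
      = (valAB ends A Aᶜ : ℚ) + (valAB ends B Bᶜ : ℚ) - 2 * (valAB ends A B : ℚ) := by
    have : ((valAB ends (A ∪ B) (A ∪ B)ᶜ + 2 * valAB ends A B : ℕ) : ℚ)
        = ((valAB ends A Aᶜ + valAB ends B Bᶜ : ℕ) : ℚ) := by rw [hval]
    push_cast at this
    linarith
  rw [Finset.sum_union hAB, hval']
  push_cast
  linarith

lemma Pq_sup [Fintype V] [Fintype E] [DecidableEq V] [DecidableEq E] (q : V → ℚ)
    (𝒞 : Finset (Finset V))
    (hdisj : ∀ C ∈ 𝒞, ∀ C' ∈ 𝒞, C ≠ C' → Disjoint C C')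
    (hP : ∀ C ∈ 𝒞, Pq ends q C) :
    Pq ends q (𝒞.sup id) := by
  classical
  induction 𝒞 using Finset.induction_on with
  | empty => simpa using Pq_empty ends q
  | @insert a s ha ih =>
    rw [Finset.sup_insert]
    have hdisj' : Disjoint a (s.sup id) := by
      rw [Finset.disjoint_sup_right]
      intro C hC
      exact hdisj a (Finset.mem_insert_self a s) C (Finset.mem_insert_of_mem hC)
        (fun h => ha (h ▸ hC))
    have : (id a ⊔ s.sup id) = a ∪ s.sup id := rfl
    rw [this]
    refine Pq_union ends q hdisj' (hP a (Finset.mem_insert_self a s)) ?_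
    exact ih (fun C hC C' hC' => hdisj C (Finset.mem_insert_of_mem hC) C'
      (Finset.mem_insert_of_mem hC')) (fun C hC => hP C (Finset.mem_insert_of_mem hC))

lemma exists_boundary {F : Finset E} {W : Finset V} {u v : V}
    (h : Reaches ends F u v) (hu : u ∈ W) (hv : v ∉ W) :
    ∃ e ∈ F, Boundary ends W e := by
  induction h with
  | refl => exact absurd hu hv
  | @tail m n h1 h2 ih =>
    by_cases hm : m ∈ W
    · obtain ⟨e, he, hcase⟩ := h2
      refine ⟨e, he, ?_⟩
      rcases hcase with h | h
      · exact Or.inl ⟨by rw [h]; exact hm, by rw [h]; exact hv⟩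
      · exact Or.inr ⟨by rw [h]; exact hv, by rw [h]; exact hm⟩
    · exact ih hm

end Aux3
section Aux4
variable (ends : E → V × V)

lemma comp_is_union [Fintype V] [Fintype E] [DecidableEq V] [DecidableEq E]
    (q : V → ℚ) {W A : Finset V} (hint : IntegralAt ends q W)
    (hA : ∀ D : Finset V, (IsCompOf ends D W ∨ IsCompOf ends D Wᶜ) → D ⊆ A ∨ Disjoint D A)
    {C : Finset V} (hC : IsCompOf ends C A) : Pq ends q C := by
  classical
  set 𝒞 := ((W.image (compOf ends W)) ∪ (Wᶜ.image (compOf ends Wᶜ))).filter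
    (fun D => ¬ Disjoint D C) with h𝒞
  have hmem : ∀ D ∈ 𝒞, (IsCompOf ends D W ∨ IsCompOf ends D Wᶜ) ∧ ¬ Disjoint D C := by
    intro D hD
    rw [h𝒞, Finset.mem_filter] at hD
    refine ⟨?_, hD.2⟩
    rcases Finset.mem_union.mp hD.1 with h | h
    · obtain ⟨v, hv, rfl⟩ := Finset.mem_image.mp h
      exact Or.inl (compOf_isCompOf ends hv)
    · obtain ⟨v, hv, rfl⟩ := Finset.mem_image.mp h
      exact Or.inr (compOf_isCompOf ends hv)
  have hDsubC : ∀ D ∈ 𝒞, D ⊆ C := by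
    intro D hD
    obtain ⟨hcomp, hnd⟩ := hmem D hD
    obtain ⟨x, hxD, hxC⟩ := Finset.not_disjoint_iff.mp hnd
    have hDA : D ⊆ A := by
      rcases hA D hcomp with h | h
      · exact h
      · exact absurd (hC.2.1 hxC) (Finset.disjoint_left.mp h hxD)
    have hconnD : ConnOn ends D := by
      rcases hcomp with h | h
      · exact h.2.2.1
      · exact h.2.2.1
    exact subset_comp_of_meet ends hC hDA hconnD hxC hxD
  have hCsub : C ⊆ 𝒞.sup id := by
    intro c hc
    by_cases hcW : c ∈ W
    · have hD𝒞 : compOf ends W c ∈ 𝒞 := by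
        rw [h𝒞, Finset.mem_filter]
        exact ⟨Finset.mem_union_left _ (Finset.mem_image.mpr ⟨c, hcW, rfl⟩),
          Finset.not_disjoint_iff.mpr ⟨c, self_mem_compOf ends hcW, hc⟩⟩
      exact (Finset.le_sup (f := id) hD𝒞 : compOf ends W c ⊆ _)
        (self_mem_compOf ends hcW)
    · have hcW' : c ∈ Wᶜ := Finset.mem_compl.mpr hcW
      have hD𝒞 : compOf ends Wᶜ c ∈ 𝒞 := by
        rw [h𝒞, Finset.mem_filter]
        exact ⟨Finset.mem_union_right _ (Finset.mem_image.mpr ⟨c, hcW', rfl⟩),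
          Finset.not_disjoint_iff.mpr ⟨c, self_mem_compOf ends hcW', hc⟩⟩
      exact (Finset.le_sup (f := id) hD𝒞 : compOf ends Wᶜ c ⊆ _)
        (self_mem_compOf ends hcW')
  have heq : C = 𝒞.sup id :=
    le_antisymm hCsub (Finset.sup_le fun D hD => hDsubC D hD)
  have hdisj : ∀ D ∈ 𝒞, ∀ D' ∈ 𝒞, D ≠ D' → Disjoint D D' := by
    intro D hD D' hD' hne
    have hWWc : ∀ X Y : Finset V, X ⊆ W → Y ⊆ Wᶜ → Disjoint X Y := by
      intro X Y hX hY
      exact Finset.disjoint_left.mpr fun x hx hx' => (Finset.mem_compl.mp (hY hx')) (hX hx)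
    rcases (hmem D hD).1 with h1 | h1 <;> rcases (hmem D' hD').1 with h2 | h2
    · rcases comps_eq_or_disjoint ends h1 h2 with h | h
      exacts [absurd h hne, h]
    · exact hWWc D D' h1.2.1 h2.2.1
    · exact (hWWc D' D h2.2.1 h1.2.1).symm
    · rcases comps_eq_or_disjoint ends h1 h2 with h | h
      exacts [absurd h hne, h]
  rw [heq]
  exact Pq_sup ends q 𝒞 hdisj (fun D hD => hint D (hmem D hD).1)

end Aux4
section Aux5
variable (ends : E → V × V)

lemma key_lemma [Fintype V] [Fintype E] [DecidableEq V] [DecidableEq E]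
    (hconn : ConnF ends (Finset.univ : Finset E)) (q : V → ℚ) {W : Finset V}
    {e₀ : E} {v₀ v₁ : V}
    (hor : ends e₀ = (v₀, v₁) ∨ ends e₀ = (v₁, v₀))
    (hv₀ : v₀ ∈ W) (hv₁ : v₁ ∉ W) (hnb : ¬ Bridge ends e₀)
    (hint : IntegralAt ends q W) :
    ∃ U : Finset V, U.Nonempty ∧ U ≠ Finset.univ ∧
      (∀ e : E, Boundary ends U e → ¬ Bridge ends e) ∧ IntegralAt ends q U := by
  classical
  set F : Finset E := Finset.univ.filter
    (fun f => ¬ (Boundary ends W f ∧ ¬ Bridge ends f)) with hF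
  set U : Finset V := Finset.univ.filter (fun v => Reaches ends F v₀ v) with hU
  have mem_U : ∀ v : V, v ∈ U ↔ Reaches ends F v₀ v := by
    intro v; rw [hU]; simp
  have mem_F : ∀ f : E, f ∈ F ↔ ¬ (Boundary ends W f ∧ ¬ Bridge ends f) := by
    intro f; rw [hF]; simp
  have hUstep : ∀ (a c : V) (f : E), f ∈ F →
      (ends f = (a, c) ∨ ends f = (c, a)) → a ∈ U → c ∈ U := by
    intro a c f hf hfe ha
    rw [mem_U] at ha ⊢
    exact ha.tail ⟨f, hf, hfe⟩
  have hv₀U : v₀ ∈ U := (mem_U v₀).mpr Relation.ReflTransGen.refl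
  -- the parity function
  set BB : Finset E := Finset.univ.filter
    (fun b => Boundary ends W b ∧ Bridge ends b) with hBB
  set φ : V → ZMod 2 := fun v => (if v ∈ W then 1 else 0) +
    ∑ b ∈ BB, (if v ∈ sideA ends b then 1 else 0) with hφdef
  have h2 : (1 : ZMod 2) + 1 = 0 := rfl
  have hstep : ∀ f ∈ F, ∀ a c : V, (ends f = (a, c) ∨ ends f = (c, a)) → φ a = φ c := by
    intro f hf a c hfe
    by_cases hbd : Boundary ends W f
    · have hbr : Bridge ends f := by
        by_contra hnbr
        exact (mem_F f).mp hf ⟨hbd, hnbr⟩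
      have hfBB : f ∈ BB := by rw [hBB]; simp [hbd, hbr]
      -- χ_W flips
      have hχ : (if a ∈ W then (1 : ZMod 2) else 0) = (if c ∈ W then 1 else 0) + 1 := by
        have hxor : (a ∈ W ∧ c ∉ W) ∨ (a ∉ W ∧ c ∈ W) := by
          rcases hbd with ⟨h1', h2'⟩ | ⟨h1', h2'⟩ <;> rcases hfe with h | h <;>
            rw [h] at h1' h2' <;> simp at h1' h2' <;> tauto
        rcases hxor with ⟨h1, h2'⟩ | ⟨h1, h2'⟩ <;> simp [h1, h2', h2]
      -- sideA f flips
      have hs : (if a ∈ sideA ends f then (1 : ZMod 2) else 0)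
          = (if c ∈ sideA ends f then 1 else 0) + 1 := by
        have h1 := sideA_fst ends f
        have h2'' := sideA_snd ends hconn hbr
        rcases hfe with h | h <;> rw [h] at h1 h2'' <;> simp at h1 h2'' <;>
          simp [h1, h2'', h2]
      have hrest : ∀ b ∈ BB.erase f,
          (if a ∈ sideA ends b then (1 : ZMod 2) else 0)
            = (if c ∈ sideA ends b then 1 else 0) := by
        intro b hb
        have hbf : f ≠ b := fun h => (Finset.mem_erase.mp hb).1 h.symm
        simp only [sideA_edge ends hbf hfe]
      rw [hφdef]
      simp only
      rw [← Finset.add_sum_erase BB _ hfBB, ← Finset.add_sum_erase BB _ hfBB,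
        Finset.sum_congr rfl hrest, hχ, hs]
      linear_combination h2
    · have hiff : (a ∈ W ↔ c ∈ W) := by
        unfold Boundary at hbd
        rcases hfe with h | h <;> rw [h] at hbd <;> simp only at hbd <;> tauto
      have hrest : ∀ b ∈ BB,
          (if a ∈ sideA ends b then (1 : ZMod 2) else 0)
            = (if c ∈ sideA ends b then 1 else 0) := by
        intro b hb
        have hbf : f ≠ b := by
          rintro rfl
          rw [hBB] at hb
          simp at hb
          exact hbd hb.1
        simp only [sideA_edge ends hbf hfe]
      rw [hφdef]
      simp only
      rw [Finset.sum_congr rfl hrest]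
      congr 1
      simp [hiff]
  have hφU : ∀ v ∈ U, φ v₀ = φ v := by
    intro v hv
    rw [mem_U] at hv
    induction hv with
    | refl => rfl
    | @tail m n h1 hstep2 ih =>
      obtain ⟨f, hfF, hfe⟩ := hstep2
      exact ih.trans (hstep f hfF m n hfe)
  have hφne : φ v₀ ≠ φ v₁ := by
    have hrest : ∀ b ∈ BB,
        (if v₀ ∈ sideA ends b then (1 : ZMod 2) else 0)
          = (if v₁ ∈ sideA ends b then 1 else 0) := by
      intro b hb
      have hbf : e₀ ≠ b := by
        rintro rfl
        rw [hBB] at hb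
        simp at hb
        exact hnb hb.2
      simp only [sideA_edge ends hbf hor]
    rw [hφdef]
    simp only
    rw [Finset.sum_congr rfl hrest, if_pos hv₀, if_neg hv₁]
    intro h
    have := add_right_cancel h
    exact one_ne_zero this
  have hv₁U : v₁ ∉ U := fun h => hφne (hφU v₁ h)
  refine ⟨U, ⟨v₀, hv₀U⟩, ?_, ?_, ?_⟩
  · intro h
    exact hv₁U (h ▸ Finset.mem_univ v₁)
  · -- boundary edges of U are not bridges
    intro e he
    have heF : e ∉ F := by
      intro heF
      rcases he with ⟨h1, h2⟩ | ⟨h1, h2⟩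
      · exact h2 (hUstep _ _ e heF (Or.inl rfl) h1)
      · exact h1 (hUstep _ _ e heF (Or.inr rfl) h2)
    have hbb : Boundary ends W e ∧ ¬ Bridge ends e := by
      by_contra hcon
      exact heF ((mem_F e).mpr hcon)
    exact hbb.2
  · -- IntegralAt U
    intro C hC
    have hside : ∀ D : Finset V, (IsCompOf ends D W ∨ IsCompOf ends D Wᶜ) →
        D ⊆ U ∨ D ⊆ Uᶜ := by
      intro D hD
      have hDside : (D ⊆ W) ∨ (D ⊆ Wᶜ) := hD.imp (fun h => h.2.1) (fun h => h.2.1)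
      have hconnD : ConnOn ends D := by
        rcases hD with h | h
        · exact h.2.2.1
        · exact h.2.2.1
      by_cases hmeet : ∃ x ∈ D, x ∈ U
      · left
        obtain ⟨x, hxD, hxU⟩ := hmeet
        intro d hd
        have hpath := hconnD x hxD d hd
        clear hd
        induction hpath with
        | refl => exact hxU
        | @tail m n h1 h2 ih =>
          obtain ⟨hmD, hnD, f, hfe⟩ := h2
          have hends : (ends f).1 ∈ D ∧ (ends f).2 ∈ D := by
            rcases hfe with h | h <;> rw [h] <;> exact ⟨‹_›, ‹_›⟩
          have hnbd : ¬ Boundary ends W f := by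
            intro hbd
            rcases hDside with hDW | hDW
            · rcases hbd with ⟨u1, u2⟩ | ⟨u1, u2⟩
              · exact u2 (hDW hends.2)
              · exact u1 (hDW hends.1)
            · rcases hbd with ⟨u1, u2⟩ | ⟨u1, u2⟩
              · exact Finset.mem_compl.mp (hDW hends.1) u1
              · exact Finset.mem_compl.mp (hDW hends.2) u2
          have hfF : f ∈ F := (mem_F f).mpr (fun hh => hnbd hh.1)
          exact hUstep m n f hfF hfe ih
      · right
        intro d hd
        exact Finset.mem_compl.mpr (fun hdU => hmeet ⟨d, hd, hdU⟩)
    rcases hC with hC | hC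
    · exact comp_is_union ends q hint (fun D hD => (hside D hD).imp id
        (fun h => Finset.disjoint_left.mpr fun x hx hx' => Finset.mem_compl.mp (h hx) hx')) hC
    · exact comp_is_union ends q hint (fun D hD => (hside D hD).symm.imp id
        (fun h => Finset.disjoint_left.mpr fun x hx hx' =>
          Finset.mem_compl.mp hx' (h hx))) hC

end Aux5
/-- `q` is non-degenerate if and only if the induced polarization
`q²` on the smoothing of `X` at its separating nodes is general.  On the dual
graph, subcurves of the smoothing `X²` correspond exactly to the proper subsets
`W` none of whose boundary edges is a bridge, and `q²` is computed by `q` with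
valences taken in Γ. -/
theorem stmt18 [Fintype V] [Fintype E] [DecidableEq V] [DecidableEq E] (ends : E → V × V)
    (hconn : ConnF ends (Finset.univ : Finset E)) (q : V → ℚ) (qz : ℤ)
    (hq : ∑ v, q v = (qz : ℚ)) :
    NonDegPol ends q ↔
      ∀ W : Finset V, W.Nonempty → W ≠ Finset.univ →
        (∀ e : E, Boundary ends W e → ¬ Bridge ends e) →
        ¬ IntegralAt ends q W := by
  constructor
  · intro hnd W hne huniv hnob
    obtain ⟨u, hu⟩ := hne
    obtain ⟨v, hv⟩ : ∃ v, v ∉ W := by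
      by_contra h
      push_neg at h
      exact huniv (Finset.eq_univ_iff_forall.mpr h)
    obtain ⟨e, _, hbd⟩ := exists_boundary ends (hconn u v) hu hv
    exact hnd W ⟨u, hu⟩ huniv (fun hsp => hnob e hbd (hsp e hbd))
  · intro hgen W hne huniv hnspine hint
    unfold Spine at hnspine
    push_neg at hnspine
    obtain ⟨e₀, hbd₀, hnb₀⟩ := hnspine
    rcases hbd₀ with ⟨h1, h2⟩ | ⟨h1, h2⟩
    · obtain ⟨U, hU1, hU2, hU3, hU4⟩ :=
        key_lemma ends hconn q (Or.inl rfl : ends e₀ = ((ends e₀).1, (ends e₀).2) ∨ _)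
          h1 h2 hnb₀ hint
      exact hgen U hU1 hU2 hU3 hU4
    · obtain ⟨U, hU1, hU2, hU3, hU4⟩ :=
        key_lemma ends hconn q (Or.inr rfl : _ ∨ ends e₀ = ((ends e₀).1, (ends e₀).2))
          h2 h1 hnb₀ hint
      exact hgen U hU1 hU2 hU3 hU4
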